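/- arXiv:2310.00290 — 2 statements merged into one kernel-verified Lean document; each statement's English description precedes it below -/
import Mathlib

section
/- Suppose z(t) = ∑_{j=1}^{d} a_j t^{k_j} μ_j^t (a_j ∈ ℂ, k_j ∈ ℤ_{≥0}, μ_j ∈ ℂ distinct pairs (μ_j, k_j), a_j ≠ 0) is bounded: |z(t)| ≤ 1 for all t ≥ 1. Then for every j, either |μ_j| < 1, or |μ_j| = 1 and k_j = 0. -/
open Finset Filter

lemma tendsto_nat_inv_zero : Tendsto (fun N : ℕ => (N:ℝ)⁻¹) atTop (nhds 0) :=
  tendsto_inv_atTop_zero.comp tendsto_natCast_atTop_atTop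

lemma cesaro_geom_zero {ω : ℂ} (h1 : ‖ω‖ = 1) (hne : ω ≠ 1) :
    Tendsto (fun N : ℕ => (N⁻¹ : ℝ) • ∑ t ∈ Finset.range N, ω ^ t) atTop (nhds 0) := by
  have hden : (0:ℝ) < ‖ω - 1‖ := by
    simp [norm_pos_iff, sub_eq_zero, hne]
  have hs : ∀ N : ℕ, ‖∑ t ∈ Finset.range N, ω ^ t‖ ≤ 2 / ‖ω - 1‖ := by
    intro N
    rw [geom_sum_eq hne, norm_div]
    have h2 : ‖ω ^ N - 1‖ ≤ 2 := by
      calc ‖ω ^ N - 1‖ ≤ ‖ω ^ N‖ + ‖(1:ℂ)‖ := norm_sub_le _ _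
      _ ≤ 2 := by simp [norm_pow, h1]; norm_num
    exact div_le_div_of_nonneg_right h2 hden.le |>.trans_eq rfl
  apply squeeze_zero_norm (a := fun N : ℕ => (2 / ‖ω - 1‖) * (N : ℝ)⁻¹)
  · intro N
    rw [norm_smul, mul_comm]
    have : ‖(N⁻¹ : ℝ)‖ = (N:ℝ)⁻¹ := by simp
    rw [this]
    exact mul_le_mul_of_nonneg_right (hs N) (by positivity)
  · simpa using tendsto_nat_inv_zero.const_mul (2 / ‖ω - 1‖)

lemma coeffs_zero_of_tendsto_zero {ι : Type*} [DecidableEq ι] (S : Finset ι) (c ω : ι → ℂ)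
    (hω : ∀ j ∈ S, ‖ω j‖ = 1) (hinj : Set.InjOn ω S)
    (h : Tendsto (fun t : ℕ => ∑ j ∈ S, c j * ω j ^ t) atTop (nhds 0)) :
    ∀ j₀ ∈ S, c j₀ = 0 := by
  intro j₀ hj₀
  have hω0 : ω j₀ ≠ 0 := by
    intro h0; have := hω j₀ hj₀; rw [h0] at this; simp at this
  set f : ℕ → ℂ := fun t => ∑ j ∈ S, c j * (ω j * (ω j₀)⁻¹) ^ t with hf
  have hf0 : Tendsto f atTop (nhds 0) := by
    have heq : ∀ t : ℕ, f t = (∑ j ∈ S, c j * ω j ^ t) * ((ω j₀)⁻¹) ^ t := by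
      intro t
      rw [Finset.sum_mul]
      exact Finset.sum_congr rfl fun j _ => by rw [mul_pow]; ring
    apply squeeze_zero_norm (a := fun t => ‖∑ j ∈ S, c j * ω j ^ t‖)
    · intro t
      rw [heq t, norm_mul, norm_pow, norm_inv]
      rw [hω j₀ hj₀]
      simp
    · exact tendsto_zero_iff_norm_tendsto_zero.mp h
  have hc := hf0.cesaro_smul
  have hre : ∀ N : ℕ, (N⁻¹ : ℝ) • ∑ t ∈ Finset.range N, f t
      = ∑ j ∈ S, c j * ((N⁻¹ : ℝ) • ∑ t ∈ Finset.range N, (ω j * (ω j₀)⁻¹) ^ t) := by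
    intro N
    rw [hf]
    rw [Finset.sum_comm]
    rw [Finset.smul_sum]
    exact Finset.sum_congr rfl fun j _ => by
      rw [← Finset.mul_sum, mul_smul_comm]
  have hlim2 : Tendsto (fun N : ℕ => ∑ j ∈ S, c j * ((N⁻¹ : ℝ) • ∑ t ∈ Finset.range N, (ω j * (ω j₀)⁻¹) ^ t))
      atTop (nhds (c j₀)) := by
    have : (c j₀) = ∑ j ∈ S, (if j = j₀ then c j₀ else 0) := by
      rw [Finset.sum_ite_eq' S j₀ (fun _ => c j₀)]
      simp [hj₀]
    rw [this]
    apply tendsto_finset_sum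
    intro j hj
    by_cases hjj : j = j₀
    · subst hjj
      simp only [if_pos rfl]
      apply Tendsto.congr' ?_ tendsto_const_nhds
      filter_upwards [eventually_ge_atTop 1] with N hN
      rw [mul_inv_cancel₀ hω0]
      simp only [one_pow, Finset.sum_const, Finset.card_range, nsmul_eq_mul, mul_one]
      rw [Complex.real_smul]
      have hNne : ((N:ℝ) : ℂ) ≠ 0 := by
        simp only [ne_eq, Complex.ofReal_natCast, Nat.cast_eq_zero]; omega
      push_cast at hNne ⊢
      rw [inv_mul_cancel₀ hNne, mul_one]
    · simp only [if_neg hjj]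
      have habs : ‖ω j * (ω j₀)⁻¹‖ = 1 := by
        rw [norm_mul, norm_inv, hω j hj, hω j₀ hj₀]; norm_num
      have hne1 : ω j * (ω j₀)⁻¹ ≠ 1 := by
        intro he
        apply hjj
        apply hinj hj hj₀
        field_simp at he
        exact he
      have := (cesaro_geom_zero habs hne1).const_mul (c j)
      simpa using this
  have := tendsto_nhds_unique (hc.congr (fun N => (hre N))) hlim2
  simpa using this.symm

lemma term_tendsto_zero (aa : ℂ) (kk K : ℕ) (m : ℂ) {r : ℝ} (hr : 1 ≤ r)
    (hm : ‖m‖ ≤ r) (hlt : ‖m‖ < r ∨ kk < K) :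
    Tendsto (fun t : ℕ => aa * (t:ℂ)^kk * m^t * ((t:ℂ)^K * (r:ℂ)^t)⁻¹) atTop (nhds 0) := by
  have hr0 : (0:ℝ) < r := by linarith
  have hnorm : ∀ t : ℕ, ‖aa * (t:ℂ)^kk * m^t * ((t:ℂ)^K * (r:ℂ)^t)⁻¹‖
      = ‖aa‖ * ((t:ℝ)^kk * (‖m‖)^t / ((t:ℝ)^K * r^t)) := by
    intro t
    simp [norm_mul, norm_pow, norm_inv, Complex.norm_natCast,
      Complex.norm_real, Real.norm_eq_abs, abs_of_pos hr0, div_eq_mul_inv, mul_assoc]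
  rcases hlt with hmlt | hklt
  · apply squeeze_zero_norm' (a := fun t : ℕ => ‖aa‖ * ((t:ℝ)^kk * (‖m‖ / r)^t))
    · filter_upwards [eventually_ge_atTop 1] with t ht
      have ht1 : (1:ℝ) ≤ (t:ℝ) := by exact_mod_cast ht
      rw [hnorm t, div_pow]
      have htK : (1:ℝ) ≤ (t:ℝ)^K := one_le_pow₀ ht1
      calc ‖aa‖ * ((t:ℝ)^kk * (‖m‖)^t / ((t:ℝ)^K * r^t))
          ≤ ‖aa‖ * ((t:ℝ)^kk * (‖m‖)^t / (1 * r^t)) := by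
            gcongr <;> positivity
        _ = ‖aa‖ * ((t:ℝ)^kk * ((‖m‖)^t / r^t)) := by ring
    · have hq : ‖m‖ / r < 1 := (div_lt_one hr0).mpr hmlt
      have hq0 : 0 ≤ ‖m‖ / r := div_nonneg (norm_nonneg _) hr0.le
      have := (tendsto_pow_const_mul_const_pow_of_lt_one kk hq0 hq).const_mul ‖aa‖
      simpa using this
  · apply squeeze_zero_norm' (a := fun t : ℕ => ‖aa‖ * ((t:ℝ))⁻¹)
    · filter_upwards [eventually_ge_atTop 1] with t ht
      have ht1 : (1:ℝ) ≤ (t:ℝ) := by exact_mod_cast ht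
      have ht0 : (0:ℝ) < (t:ℝ) := by linarith
      rw [hnorm t]
      have step1 : (t:ℝ)^kk * (‖m‖)^t / ((t:ℝ)^K * r^t)
          ≤ (t:ℝ)^kk * r^t / ((t:ℝ)^K * r^t) := by
        gcongr
      have step2 : (t:ℝ)^kk * r^t / ((t:ℝ)^K * r^t) = (t:ℝ)^kk / (t:ℝ)^K := by
        rw [mul_comm ((t:ℝ)^K), ← div_div, mul_div_assoc, div_self (by positivity), mul_one]
      have step3 : (t:ℝ)^kk / (t:ℝ)^K ≤ (t:ℝ)⁻¹ := by
        rw [div_le_iff₀ (by positivity), inv_mul_eq_div, le_div_iff₀ ht0, ← pow_succ]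
        exact pow_le_pow_right₀ ht1 hklt
      apply mul_le_mul_of_nonneg_left _ (norm_nonneg aa)
      exact le_trans (le_of_le_of_eq step1 step2) step3
    · simpa using tendsto_nat_inv_zero.const_mul ‖aa‖

theorem bounded_modes_nongrowing (d : ℕ) (hd : 1 ≤ d)
    (a : Fin d → ℂ) (k : Fin d → ℕ) (μ : Fin d → ℂ)
    (hdist : Function.Injective (fun j : Fin d => (μ j, k j)))
    (ha : ∀ j, a j ≠ 0)
    (z : ℕ → ℂ)
    (hz : ∀ t : ℕ, z t = ∑ j : Fin d, a j * (t : ℂ) ^ (k j) * μ j ^ t)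
    (hbdd : ∀ t : ℕ, 1 ≤ t → ‖z t‖ ≤ 1) :
    ∀ j : Fin d, ‖μ j‖ < 1 ∨ (‖μ j‖ = 1 ∧ k j = 0) := by
  intro j₀
  by_contra hbad
  push_neg at hbad
  obtain ⟨h1, h2⟩ := hbad
  have hne : (Finset.univ : Finset (Fin d)).Nonempty := ⟨j₀, Finset.mem_univ _⟩
  set r : ℝ := Finset.univ.sup' hne (fun j => ‖μ j‖) with hrdef
  have hrle : ∀ j, ‖μ j‖ ≤ r := by
    intro j; rw [hrdef]; exact Finset.le_sup' (fun j => ‖μ j‖) (Finset.mem_univ j)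
  have hr1 : 1 ≤ r := le_trans h1 (hrle j₀)
  have hr0 : (0:ℝ) < r := by linarith
  obtain ⟨jr, -, hjr⟩ := Finset.exists_mem_eq_sup' hne (fun j => ‖μ j‖)
  set T := Finset.univ.filter (fun j => ‖μ j‖ = r) with hT
  have hTne : T.Nonempty := ⟨jr, by simp [hT, hjr.symm, hrdef]⟩
  set K := T.sup' hTne k with hKdef
  obtain ⟨jS, hjST, hjSK⟩ := Finset.exists_mem_eq_sup' hTne k
  set S := Finset.univ.filter (fun j => ‖μ j‖ = r ∧ k j = K) with hS
  have hjSabs : ‖μ jS‖ = r := (Finset.mem_filter.mp hjST).2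
  have hjS : jS ∈ S := by
    rw [hS, Finset.mem_filter]
    exact ⟨Finset.mem_univ _, hjSabs, hjSK.symm⟩
  -- key growth dichotomy
  have hWtop : Tendsto (fun t : ℕ => (t:ℝ)^K * r^t) atTop atTop := by
    rcases eq_or_lt_of_le hr1 with hre | hrlt
    · -- r = 1, need K ≥ 1
      have hj₀abs : ‖μ j₀‖ = r := le_antisymm (hrle j₀) (hre ▸ h1)
      have hj₀T : j₀ ∈ T := by rw [hT, Finset.mem_filter]; exact ⟨Finset.mem_univ _, hj₀abs⟩
      have hk₀ : k j₀ ≠ 0 := h2 (by rw [hj₀abs, ← hre])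
      have hK1 : K ≠ 0 := by
        have := Finset.le_sup' k hj₀T
        rw [← hKdef] at this
        omega
      have : Tendsto (fun t : ℕ => (t:ℝ)^K) atTop atTop :=
        (tendsto_pow_atTop hK1).comp tendsto_natCast_atTop_atTop
      apply this.congr
      intro t; rw [← hre]; simp
    · apply tendsto_atTop_mono' _ _ (tendsto_pow_atTop_atTop_of_one_lt hrlt)
      filter_upwards [eventually_ge_atTop 1] with t ht
      have ht1 : (1:ℝ) ≤ (t:ℝ) := by exact_mod_cast ht
      have : (1:ℝ) ≤ (t:ℝ)^K := one_le_pow₀ ht1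
      nlinarith [pow_pos hr0 t]
  have hF0 : Tendsto (fun t : ℕ => z t * ((t:ℂ)^K * (r:ℂ)^t)⁻¹) atTop (nhds 0) := by
    apply squeeze_zero_norm' (a := fun t : ℕ => ((t:ℝ)^K * r^t)⁻¹)
    · filter_upwards [eventually_ge_atTop 1] with t ht
      have ht1 : (1:ℝ) ≤ (t:ℝ) := by exact_mod_cast ht
      have hnorm : ‖((t:ℂ)^K * (r:ℂ)^t)⁻¹‖ = ((t:ℝ)^K * r^t)⁻¹ := by
        simp [norm_inv, norm_mul, norm_pow, Complex.norm_natCast,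
          Complex.norm_real, Real.norm_eq_abs, abs_of_pos hr0]
      rw [norm_mul, hnorm]
      have hb := hbdd t ht
      have hpos : (0:ℝ) ≤ ((t:ℝ)^K * r^t)⁻¹ := by positivity
      calc ‖z t‖ * ((t:ℝ)^K * r^t)⁻¹ ≤ 1 * ((t:ℝ)^K * r^t)⁻¹ :=
        mul_le_mul_of_nonneg_right hb hpos
      _ = _ := one_mul _
    · exact hWtop.inv_tendsto_atTop
  have h_tail : Tendsto (fun t : ℕ => ∑ j ∈ Finset.univ.filter
      (fun j => ¬(‖μ j‖ = r ∧ k j = K)),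
      a j * (t:ℂ)^(k j) * μ j ^ t * ((t:ℂ)^K * (r:ℂ)^t)⁻¹) atTop (nhds 0) := by
    rw [show (0:ℂ) = ∑ j ∈ Finset.univ.filter
      (fun j => ¬(‖μ j‖ = r ∧ k j = K)), (0:ℂ) by simp]
    apply tendsto_finset_sum
    intro j hj
    apply term_tendsto_zero _ _ _ _ hr1 (hrle j)
    rw [Finset.mem_filter] at hj
    by_cases habs : ‖μ j‖ = r
    · right
      have hjT : j ∈ T := by rw [hT, Finset.mem_filter]; exact ⟨Finset.mem_univ _, habs⟩
      have hle : k j ≤ K := by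
        have := Finset.le_sup' k hjT; rw [← hKdef] at this; exact this
      have : k j ≠ K := fun hk => hj.2 ⟨habs, hk⟩
      omega
    · exact Or.inl (lt_of_le_of_ne (hrle j) habs)
  have h_main : Tendsto (fun t : ℕ => ∑ j ∈ S, a j * (μ j * ((r:ℂ))⁻¹) ^ t)
      atTop (nhds 0) := by
    have := hF0.sub h_tail
    rw [sub_zero] at this
    apply Tendsto.congr' _ this
    filter_upwards [eventually_ge_atTop 1] with t ht
    have htC : ((t:ℂ))^K ≠ 0 := by
      apply pow_ne_zero
      simp only [ne_eq, Nat.cast_eq_zero]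
      omega
    have hrC : ((r:ℂ)) ≠ 0 := by
      simp only [ne_eq, Complex.ofReal_eq_zero]
      exact ne_of_gt hr0
    rw [hz t, Finset.sum_mul,
      ← Finset.sum_filter_add_sum_filter_not Finset.univ
        (fun j => ‖μ j‖ = r ∧ k j = K)
        (fun j => a j * (t:ℂ)^(k j) * μ j ^ t * ((t:ℂ)^K * (r:ℂ)^t)⁻¹)]
    rw [← hS, add_sub_cancel_right]
    apply Finset.sum_congr rfl
    intro j hj
    rw [hS, Finset.mem_filter] at hj
    obtain ⟨-, -, hk⟩ := hj
    rw [hk, mul_pow, mul_inv, ← Complex.ofReal_pow] at *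
    field_simp
    rw [Complex.ofReal_pow, one_div, inv_pow, mul_assoc (a j * μ j ^ t), mul_inv_cancel₀ (pow_ne_zero _ hrC), mul_one]
  -- apply orthogonality lemma
  have hzero := coeffs_zero_of_tendsto_zero S a (fun j => μ j * ((r:ℂ))⁻¹)
    (fun j hj => by
      rw [hS, Finset.mem_filter] at hj
      rw [norm_mul, norm_inv, Complex.norm_real, Real.norm_eq_abs, abs_of_pos hr0, hj.2.1]
      field_simp)
    (fun j hj j' hj' hee => by
      simp only [hS, Finset.coe_filter, Set.mem_setOf_eq] at hj hj'
      have hrinv : ((r:ℂ))⁻¹ ≠ 0 := by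
        simp only [ne_eq, inv_eq_zero, Complex.ofReal_eq_zero]
        exact ne_of_gt hr0
      have hμ : μ j = μ j' := mul_right_cancel₀ hrinv hee
      apply hdist
      simp only [hμ, hj.2.2, hj'.2.2])
    h_main jS hjS
  exact ha jS hzero
end

section
/- Let z : ℤ_{≥-d+1} → [-1,1] satisfy the autoregressive recurrence z(t) = ∑_{ℓ=1}^{d} p_ℓ z(t-ℓ) for all t ≥ 1, with real coefficients p_ℓ. Then there exists an almost periodic function ap : ℤ → ℂ (a finite sum ∑_k c_k e^{iλ_k t} with λ_k ∈ ℝ) such that z(t) - ap(t) → 0 as t → ∞. -/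
open Finset Filter

/-- Compatibility: the complex absolute value as an `AbsoluteValue` (the norm). -/
noncomputable def Complex.abs : AbsoluteValue ℂ ℝ :=
  IsAbsoluteValue.toAbsoluteValue (norm : ℂ → ℝ)

lemma Complex.abs_apply' (z : ℂ) : Complex.abs z = ‖z‖ := rfl

lemma Complex.abs_natCast (n : ℕ) : Complex.abs (n : ℂ) = n := by
  rw [Complex.abs_apply', Complex.norm_natCast]

lemma Complex.abs_ofReal (x : ℝ) : Complex.abs (x : ℂ) = |x| := by
  rw [Complex.abs_apply', Complex.norm_real, Real.norm_eq_abs]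

lemma Complex.norm_eq_abs (z : ℂ) : ‖z‖ = Complex.abs z := rfl

lemma Complex.abs_mul_exp_arg_mul_I (x : ℂ) :
    ((Complex.abs x : ℝ) : ℂ) * Complex.exp (x.arg * Complex.I) = x :=
  Complex.norm_mul_exp_arg_mul_I x

/-- A finite trigonometric sum (almost periodic sequence). -/
def Trig (g : ℕ → ℂ) : Prop :=
  ∃ (n : ℕ) (c : Fin n → ℂ) (l : Fin n → ℂ), (∀ i, Complex.abs (l i) = 1) ∧
    ∀ t, g t = ∑ i, c i * l i ^ t

/-- Geometrically decaying sequence. -/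
def Decayic (r : ℕ → ℂ) : Prop :=
  ∃ C ρ : ℝ, 0 ≤ ρ ∧ ρ < 1 ∧ ∀ t, Complex.abs (r t) ≤ C * ρ ^ t

def Good (w : ℕ → ℂ) : Prop :=
  ∃ g r : ℕ → ℂ, Trig g ∧ Decayic r ∧ ∀ t, w t = g t + r t

lemma trig_zero : Trig (fun _ => 0) :=
  ⟨0, ![], ![], by simp, by simp⟩

lemma trig_add {g₁ g₂ : ℕ → ℂ} (h₁ : Trig g₁) (h₂ : Trig g₂) :
    Trig (fun t => g₁ t + g₂ t) := by
  obtain ⟨n₁, c₁, l₁, hl₁, hg₁⟩ := h₁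
  obtain ⟨n₂, c₂, l₂, hl₂, hg₂⟩ := h₂
  refine ⟨n₁ + n₂, Fin.append c₁ c₂, Fin.append l₁ l₂, ?_, ?_⟩
  · intro i
    refine Fin.addCases (fun j => ?_) (fun j => ?_) i <;>
      simp [Fin.append_left, Fin.append_right, hl₁, hl₂]
  · intro t
    simp only [hg₁ t, hg₂ t, Fin.sum_univ_add]
    simp [Fin.append_left, Fin.append_right]

/-- A trig sum indexed by a finset. -/
lemma trig_finsetSum {ι : Type*} [Fintype ι] (s : Finset ι) (c l : ι → ℂ)
    (hl : ∀ i ∈ s, Complex.abs (l i) = 1) :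
    Trig (fun t => ∑ i ∈ s, c i * l i ^ t) := by
  classical
  induction s using Finset.induction with
  | empty => simpa using trig_zero
  | @insert a s' hx ih =>
    have h1 : Trig (fun t => c a * l a ^ t) :=
      ⟨1, ![c a], ![l a], by simpa using hl a (mem_insert_self a s'), by simp⟩
    have h2 := ih (fun i hi => hl i (mem_insert_of_mem hi))
    have := trig_add h1 h2
    simpa [Finset.sum_insert hx] using this

lemma trig_single (a μ : ℂ) (hμ : Complex.abs μ = 1) : Trig (fun t => a * μ ^ t) :=
  ⟨1, ![a], ![μ], by simpa, by simp⟩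

lemma decayic_nonneg_C {r : ℕ → ℂ} (h : Decayic r) :
    ∃ C ρ : ℝ, 0 ≤ C ∧ 0 ≤ ρ ∧ ρ < 1 ∧ ∀ t, Complex.abs (r t) ≤ C * ρ ^ t := by
  obtain ⟨C, ρ, h0, h1, hb⟩ := h
  have hC : 0 ≤ C := le_trans (Complex.abs.nonneg _) (by simpa using hb 0)
  exact ⟨C, ρ, hC, h0, h1, hb⟩

-- aux geometric bound
lemma aux_geom (a b : ℝ) (ha : 0 ≤ a) (hab : a < b) (n : ℕ) :
    ∑ j ∈ Finset.range n, a ^ (n - 1 - j) * b ^ j ≤ b ^ n / (b - a) := by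
  have hba : 0 < b - a := by linarith
  have key : (∑ j ∈ Finset.range n, b ^ j * a ^ (n - 1 - j)) * (b - a) = b ^ n - a ^ n :=
    geom_sum₂_mul b a n
  have h1 : ∑ j ∈ Finset.range n, a ^ (n - 1 - j) * b ^ j = (b ^ n - a ^ n) / (b - a) := by
    rw [eq_div_iff (ne_of_gt hba), ← key]
    congr 1; exact Finset.sum_congr rfl fun j _ => mul_comm _ _
  rw [h1]
  have h2 : b ^ n - a ^ n ≤ b ^ n := by nlinarith [pow_nonneg ha n]
  exact div_le_div_of_nonneg_right h2 hba.le


lemma eq_zero_of_mul_nat_le (x : ℂ) (K : ℝ) (h : ∀ n : ℕ, Complex.abs x * n ≤ K) : x = 0 := by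
  by_contra hx
  have hpos : 0 < Complex.abs x := Complex.abs.pos hx
  obtain ⟨n, hn⟩ := exists_nat_gt (K / Complex.abs x)
  have := h n
  rw [div_lt_iff₀ hpos] at hn
  nlinarith

lemma geom_sum_le' {ρ : ℝ} (h0 : 0 ≤ ρ) (h1 : ρ < 1) (n : ℕ) :
    ∑ j ∈ Finset.range n, ρ ^ j ≤ (1 - ρ)⁻¹ := by
  rw [← tsum_geometric_of_lt_one h0 h1]
  exact Summable.sum_le_tsum (Finset.range n) (fun i _ => by positivity)
    (summable_geometric_of_lt_one h0 h1)

section FirstOrder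
variable (μ cc : ℂ) (v r : ℕ → ℂ) (C ρ Bv : ℝ)

lemma first_order (hC : 0 ≤ C) (hρ0 : 0 ≤ ρ) (hρ1 : ρ < 1)
    (hr : ∀ t, Complex.abs (r t) ≤ C * ρ ^ t)
    (hvB : ∀ n, Complex.abs (v n) ≤ Bv)
    (hv : ∀ n, v (n + 1) = μ * v n + cc * μ ^ n + r n) :
    Good v := by
  have hBv0 : 0 ≤ Bv := le_trans (Complex.abs.nonneg _) (hvB 0)
  -- forward explicit formula
  have hform : ∀ n, v n = μ ^ n * v 0 +
      ∑ j ∈ Finset.range n, μ ^ (n - 1 - j) * (cc * μ ^ j + r j) := by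
    intro n
    induction n with
    | zero => simp
    | succ n ih =>
      rw [hv n, ih, Finset.sum_range_succ]
      have e1 : ∀ j ∈ Finset.range n,
          μ * (μ ^ (n - 1 - j) * (cc * μ ^ j + r j)) = μ ^ (n + 1 - 1 - j) * (cc * μ ^ j + r j) := by
        intro j hj
        rw [Finset.mem_range] at hj
        rw [← mul_assoc, ← pow_succ']
        congr 2
        omega
      rw [mul_add, mul_add, Finset.mul_sum, Finset.sum_congr rfl e1, ← mul_assoc, ← pow_succ']
      simp only [Nat.add_sub_cancel, Nat.sub_self, pow_zero, one_mul]
      ring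
  have hsum1 : ∀ n, ∑ j ∈ Finset.range n, μ ^ (n - 1 - j) * (cc * μ ^ j + r j)
      = (n : ℂ) * (cc * μ ^ (n - 1)) + ∑ j ∈ Finset.range n, μ ^ (n - 1 - j) * r j := by
    intro n
    simp only [mul_add]
    rw [Finset.sum_add_distrib]
    congr 1
    rw [Finset.sum_congr rfl (g := fun _ => cc * μ ^ (n - 1)) ?_, Finset.sum_const,
      Finset.card_range, nsmul_eq_mul]
    intro j hj
    rw [Finset.mem_range] at hj
    rw [mul_left_comm, ← pow_add]
    congr 2
    omega
  have he : ∀ n : ℕ, (n : ℂ) * (cc * μ ^ (n - 1))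
      = v n - μ ^ n * v 0 - ∑ j ∈ Finset.range n, μ ^ (n - 1 - j) * r j := by
    intro n
    rw [hform n, hsum1 n]; ring
  rcases lt_trichotomy (Complex.abs μ) 1 with hμ | hμ | hμ
  · -- case |μ| < 1
    set a := Complex.abs μ with ha
    have ha0 : 0 ≤ a := Complex.abs.nonneg μ
    set P : ℝ := max ρ ((a + 1) / 2) with hP
    have hρP : ρ ≤ P := le_max_left _ _
    have haP : a < P := lt_of_lt_of_le (by linarith) (le_max_right _ _)
    have hP1 : P < 1 := max_lt hρ1 (by linarith)
    have hP0 : 0 ≤ P := le_trans hρ0 hρP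
    refine ⟨fun _ => 0, v, ⟨0, ![], ![], by simp, by simp⟩,
      ⟨Complex.abs (v 0) + (Complex.abs cc + C) / (P - a), P, hP0, hP1, ?_⟩,
      fun t => by ring⟩
    intro n
    have h1 : Complex.abs (∑ j ∈ Finset.range n, μ ^ (n - 1 - j) * (cc * μ ^ j + r j))
        ≤ (Complex.abs cc + C) * ∑ j ∈ Finset.range n, a ^ (n - 1 - j) * P ^ j := by
      rw [Finset.mul_sum]
      refine le_trans (Complex.abs.sum_le _ _) (Finset.sum_le_sum ?_)
      intro j hj
      rw [map_mul, map_pow]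
      have h2 : Complex.abs (cc * μ ^ j + r j) ≤ (Complex.abs cc + C) * P ^ j := by
        refine le_trans (Complex.abs.add_le _ _) ?_
        rw [map_mul, map_pow, add_mul]
        refine add_le_add ?_ ?_
        · exact mul_le_mul_of_nonneg_left (pow_le_pow_left₀ ha0 haP.le j) (Complex.abs.nonneg cc)
        · exact le_trans (hr j) (mul_le_mul_of_nonneg_left (pow_le_pow_left₀ hρ0 hρP j) hC)
      calc a ^ (n - 1 - j) * Complex.abs (cc * μ ^ j + r j)
          ≤ a ^ (n - 1 - j) * ((Complex.abs cc + C) * P ^ j) := by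
            gcongr
        _ = (Complex.abs cc + C) * (a ^ (n - 1 - j) * P ^ j) := by ring
    have h3 : ∑ j ∈ Finset.range n, a ^ (n - 1 - j) * P ^ j ≤ P ^ n / (P - a) :=
      aux_geom a P ha0 haP n
    have h4 : Complex.abs (v n) ≤ P ^ n * Complex.abs (v 0)
        + (Complex.abs cc + C) * (P ^ n / (P - a)) := by
      rw [hform n]
      refine le_trans (Complex.abs.add_le _ _) (add_le_add ?_ ?_)
      · rw [map_mul, map_pow]
        exact mul_le_mul_of_nonneg_right (pow_le_pow_left₀ ha0 haP.le n) (Complex.abs.nonneg _)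
      · exact le_trans h1 (mul_le_mul_of_nonneg_left h3 (by positivity))
    refine le_trans h4 (le_of_eq ?_)
    field_simp
  · -- case |μ| = 1
    have hμ0 : μ ≠ 0 := by
      intro h; rw [h] at hμ; simp at hμ
    have habsμpow : ∀ k : ℕ, Complex.abs (μ ^ k) = 1 := by
      intro k; rw [map_pow, hμ, one_pow]
    have hcc : cc = 0 := by
      apply eq_zero_of_mul_nat_le cc (2 * Bv + C * (1 - ρ)⁻¹)
      intro n
      have habs : Complex.abs ((n : ℂ) * (cc * μ ^ (n - 1))) = Complex.abs cc * n := by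
        rw [map_mul, map_mul, habsμpow, Complex.abs_natCast]; ring
      rw [← habs, he n]
      have h5 : Complex.abs (∑ j ∈ Finset.range n, μ ^ (n - 1 - j) * r j)
          ≤ C * (1 - ρ)⁻¹ := by
        refine le_trans (Complex.abs.sum_le _ _) ?_
        have : ∀ j ∈ Finset.range n, Complex.abs (μ ^ (n - 1 - j) * r j) ≤ C * ρ ^ j := by
          intro j _; rw [map_mul, habsμpow, one_mul]; exact hr j
        refine le_trans (Finset.sum_le_sum this) ?_
        rw [← Finset.mul_sum]
        exact mul_le_mul_of_nonneg_left (geom_sum_le' hρ0 hρ1 n) hC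
      calc Complex.abs (v n - μ ^ n * v 0 - ∑ j ∈ Finset.range n, μ ^ (n - 1 - j) * r j)
          ≤ Complex.abs (v n - μ ^ n * v 0)
            + Complex.abs (∑ j ∈ Finset.range n, μ ^ (n - 1 - j) * r j) :=
            Complex.abs.sub_le_add _ _
        _ ≤ (Bv + Bv) + C * (1 - ρ)⁻¹ := by
            refine add_le_add (le_trans (Complex.abs.sub_le_add _ _) ?_) h5
            refine add_le_add (hvB n) ?_
            rw [map_mul, habsμpow, one_mul]; exact hvB 0
        _ = 2 * Bv + C * (1 - ρ)⁻¹ := by ring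
    -- now cc = 0
    set f : ℕ → ℂ := fun j => (μ⁻¹) ^ (j + 1) * r j with hf
    have hfb : ∀ j, ‖f j‖ ≤ C * ρ ^ j := by
      intro j
      have : ‖f j‖ = Complex.abs (r j) := by
        simp only [hf, Complex.norm_eq_abs, map_mul, map_pow, map_inv₀, hμ, inv_one, one_pow,
          one_mul]
      rw [this]; exact hr j
    have hsf : Summable f :=
      Summable.of_norm_bounded ((summable_geometric_of_lt_one hρ0 hρ1).mul_left C) hfb
    have hfn : Summable fun j => ‖f j‖ :=
      Summable.of_nonneg_of_le (fun _ => norm_nonneg _) hfb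
        ((summable_geometric_of_lt_one hρ0 hρ1).mul_left C)
    set t0 : ℂ := ∑' j, f j with ht0
    have htail : ∀ n, Complex.abs (∑' i, f (i + n)) ≤ C * (1 - ρ)⁻¹ * ρ ^ n := by
      intro n
      have hfns : Summable fun i => ‖f (i + n)‖ := (summable_nat_add_iff n).2 hfn
      have hgs : Summable fun i : ℕ => C * ρ ^ n * ρ ^ i :=
        (summable_geometric_of_lt_one hρ0 hρ1).mul_left _
      calc Complex.abs (∑' i, f (i + n)) = ‖∑' i, f (i + n)‖ := rfl
        _ ≤ ∑' i, ‖f (i + n)‖ := norm_tsum_le_tsum_norm hfns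
        _ ≤ ∑' i : ℕ, C * ρ ^ n * ρ ^ i := by
            refine Summable.tsum_le_tsum (fun i => ?_) hfns hgs
            refine le_trans (hfb (i + n)) (le_of_eq ?_)
            rw [pow_add]; ring
        _ = C * (1 - ρ)⁻¹ * ρ ^ n := by
            rw [tsum_mul_left, tsum_geometric_of_lt_one hρ0 hρ1]; ring
    have hform2 : ∀ n, v n = (v 0 + t0) * μ ^ n - μ ^ n * (∑' i, f (i + n)) := by
      intro n
      have hterm : ∀ j ∈ Finset.range n, μ ^ (n - 1 - j) * r j = μ ^ n * f j := by
        intro j hj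
        rw [Finset.mem_range] at hj
        have hpow : μ ^ (n - 1 - j) = μ ^ n * μ⁻¹ ^ (j + 1) := by
          rw [inv_pow, eq_comm, mul_inv_eq_iff_eq_mul₀ (pow_ne_zero _ hμ0), ← pow_add]
          congr 1
          omega
        show μ ^ (n - 1 - j) * r j = μ ^ n * (μ⁻¹ ^ (j + 1) * r j)
        rw [← mul_assoc, ← hpow]
      have hsplit : ∑ j ∈ Finset.range n, f j = t0 - ∑' i, f (i + n) :=
        eq_sub_of_add_eq (Summable.sum_add_tsum_nat_add n hsf)
      rw [hform n, hcc]
      simp only [zero_mul, zero_add]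
      rw [Finset.sum_congr rfl hterm, ← Finset.mul_sum, hsplit]
      ring
    refine ⟨fun n => (v 0 + t0) * μ ^ n, fun n => v n - (v 0 + t0) * μ ^ n,
      ⟨1, ![v 0 + t0], ![μ], by simpa using hμ, by simp⟩,
      ⟨C * (1 - ρ)⁻¹, ρ, hρ0, hρ1, ?_⟩, fun n => by ring⟩
    intro n
    show Complex.abs (v n - (v 0 + t0) * μ ^ n) ≤ C * (1 - ρ)⁻¹ * ρ ^ n
    have : v n - (v 0 + t0) * μ ^ n = -(μ ^ n * (∑' i, f (i + n))) := by
      rw [hform2 n]; ring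
    rw [this, map_neg_eq_map, map_mul, habsμpow, one_mul]
    exact htail n
  · -- case |μ| > 1
    set a := Complex.abs μ with ha
    have ha0 : (0:ℝ) < a := lt_trans one_pos hμ
    have hμ0 : μ ≠ 0 := by
      intro h
      have h2 : a = 0 := by rw [ha, h, map_zero]
      linarith
    have hρa : ρ < a := hρ1.trans hμ
    have hrefl : ∀ m, ∑ j ∈ Finset.range m, a ^ (m - 1 - j) * ρ ^ j
        = ∑ j ∈ Finset.range m, ρ ^ (m - 1 - j) * a ^ j := by
      intro m
      rw [← Finset.sum_range_reflect (fun j => ρ ^ (m - 1 - j) * a ^ j) m]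
      refine Finset.sum_congr rfl fun j hj => ?_
      rw [Finset.mem_range] at hj
      have hmj : m - 1 - (m - 1 - j) = j := by omega
      rw [hmj, mul_comm]
    have hgeom : ∀ m, ∑ j ∈ Finset.range m, a ^ (m - 1 - j) * ρ ^ j ≤ a ^ m / (a - ρ) := by
      intro m
      rw [hrefl m]
      exact aux_geom ρ a hρ0 hρa m
    -- cc = 0
    have hcc : cc = 0 := by
      apply eq_zero_of_mul_nat_le cc (Bv * (1 + a) + C * (a / (a - ρ)))
      intro m
      have habs : Complex.abs ((m : ℂ) * (cc * μ ^ (m - 1)))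
          = Complex.abs cc * m * a ^ (m - 1) := by
        rw [map_mul, map_mul, map_pow, Complex.abs_natCast]; ring
      have h5 : Complex.abs (∑ j ∈ Finset.range m, μ ^ (m - 1 - j) * r j)
          ≤ C * (a ^ m / (a - ρ)) := by
        refine le_trans (Complex.abs.sum_le _ _) ?_
        have hpt : ∀ j ∈ Finset.range m,
            Complex.abs (μ ^ (m - 1 - j) * r j) ≤ C * (a ^ (m - 1 - j) * ρ ^ j) := by
          intro j _
          rw [map_mul, map_pow]
          calc a ^ (m - 1 - j) * Complex.abs (r j) ≤ a ^ (m - 1 - j) * (C * ρ ^ j) := by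
                exact mul_le_mul_of_nonneg_left (hr j) (by positivity)
            _ = C * (a ^ (m - 1 - j) * ρ ^ j) := by ring
        refine le_trans (Finset.sum_le_sum hpt) ?_
        rw [← Finset.mul_sum]
        exact mul_le_mul_of_nonneg_left (hgeom m) hC
      have hmain : Complex.abs cc * m * a ^ (m - 1)
          ≤ Bv + Bv * a ^ m + C * (a ^ m / (a - ρ)) := by
        rw [← habs, he m]
        calc Complex.abs (v m - μ ^ m * v 0 - ∑ j ∈ Finset.range m, μ ^ (m - 1 - j) * r j)
            ≤ Complex.abs (v m - μ ^ m * v 0)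
              + Complex.abs (∑ j ∈ Finset.range m, μ ^ (m - 1 - j) * r j) :=
              Complex.abs.sub_le_add _ _
          _ ≤ (Bv + a ^ m * Bv) + C * (a ^ m / (a - ρ)) := by
              refine add_le_add (le_trans (Complex.abs.sub_le_add _ _) ?_) h5
              refine add_le_add (hvB m) ?_
              rw [map_mul, map_pow]
              exact mul_le_mul_of_nonneg_left (hvB 0) (by positivity)
          _ = Bv + Bv * a ^ m + C * (a ^ m / (a - ρ)) := by ring
      have h1m : (1:ℝ) ≤ a ^ (m - 1) := one_le_pow₀ hμ.le
      have hstep : a ^ m ≤ a * a ^ (m - 1) := by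
        rcases m with _ | k
        · simpa using hμ.le
        · simp only [Nat.add_sub_cancel]
          exact le_of_eq (pow_succ' a k)
      have hfinal : Complex.abs cc * ↑m * a ^ (m - 1)
          ≤ (Bv * (1 + a) + C * (a / (a - ρ))) * a ^ (m - 1) := by
        refine le_trans hmain ?_
        have e2 : (Bv * (1 + a) + C * (a / (a - ρ))) * a ^ (m - 1)
            = Bv * a ^ (m - 1) + Bv * (a * a ^ (m - 1)) + C / (a - ρ) * (a * a ^ (m - 1)) := by
          field_simp
        rw [e2]
        refine add_le_add (add_le_add ?_ ?_) ?_
        · nlinarith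
        · exact mul_le_mul_of_nonneg_left hstep hBv0
        · have hCa : C * (a ^ m / (a - ρ)) = C / (a - ρ) * a ^ m := by ring
          rw [hCa]
          exact mul_le_mul_of_nonneg_left hstep (div_nonneg hC (by linarith))
      exact le_of_mul_le_mul_right hfinal (pow_pos ha0 _)
    -- backward formula with cc = 0
    have hback : ∀ n m, μ ^ m * v n = v (n + m)
        - ∑ j ∈ Finset.range m, μ ^ (m - 1 - j) * r (n + j) := by
      intro n m
      induction m with
      | zero => simp
      | succ m ih =>
        have e1 : ∀ j ∈ Finset.range m,
            μ * (μ ^ (m - 1 - j) * r (n + j)) = μ ^ (m + 1 - 1 - j) * r (n + j) := by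
          intro j hj
          rw [Finset.mem_range] at hj
          rw [← mul_assoc, ← pow_succ']
          congr 2
          omega
        have h7 : μ ^ (m + 1) * v n
            = μ * v (n + m) - ∑ j ∈ Finset.range m, μ ^ (m + 1 - 1 - j) * r (n + j) := by
          rw [← Finset.sum_congr rfl e1, ← Finset.mul_sum, pow_succ', mul_assoc, ih]
          ring
        have hv' : v (n + (m + 1)) = μ * v (n + m) + cc * μ ^ (n + m) + r (n + m) := hv (n + m)
        rw [Finset.sum_range_succ, hv', h7, hcc]
        have e3 : m + 1 - 1 - m = 0 := by omega
        rw [e3, pow_zero, one_mul]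
        ring
    -- geometric decay of v
    have hdecay : ∀ n, Complex.abs (v n) ≤ C / (a - ρ) * ρ ^ n := by
      intro n
      have hbound : ∀ m, Complex.abs (v n) ≤ Bv * (a⁻¹) ^ m + C * ρ ^ n / (a - ρ) := by
        intro m
        rw [← mul_le_mul_iff_right₀ (pow_pos ha0 m)]
        have e4 : a ^ m * (Bv * a⁻¹ ^ m + C * ρ ^ n / (a - ρ))
            = Bv + a ^ m * (C * ρ ^ n / (a - ρ)) := by
          rw [inv_pow]
          field_simp
        rw [e4]
        have h8 : Complex.abs (μ ^ m * v n) ≤ Bv + C * ρ ^ n * (a ^ m / (a - ρ)) := by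
          rw [hback n m]
          refine le_trans (Complex.abs.sub_le_add _ _) (add_le_add (hvB _) ?_)
          refine le_trans (Complex.abs.sum_le _ _) ?_
          have hpt : ∀ j ∈ Finset.range m,
              Complex.abs (μ ^ (m - 1 - j) * r (n + j)) ≤ C * ρ ^ n * (a ^ (m - 1 - j) * ρ ^ j) := by
            intro j _
            rw [map_mul, map_pow]
            calc a ^ (m - 1 - j) * Complex.abs (r (n + j))
                ≤ a ^ (m - 1 - j) * (C * ρ ^ (n + j)) :=
                  mul_le_mul_of_nonneg_left (hr (n + j)) (by positivity)
              _ = C * ρ ^ n * (a ^ (m - 1 - j) * ρ ^ j) := by rw [pow_add]; ring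
          refine le_trans (Finset.sum_le_sum hpt) ?_
          rw [← Finset.mul_sum]
          exact mul_le_mul_of_nonneg_left (hgeom m) (by positivity)
        calc a ^ m * Complex.abs (v n) = Complex.abs (μ ^ m * v n) := by
              rw [map_mul, map_pow]
          _ ≤ Bv + C * ρ ^ n * (a ^ m / (a - ρ)) := h8
          _ = Bv + a ^ m * (C * ρ ^ n / (a - ρ)) := by ring
      have htendsto : Filter.Tendsto (fun m : ℕ => Bv * (a⁻¹) ^ m + C * ρ ^ n / (a - ρ))
          Filter.atTop (nhds (C * ρ ^ n / (a - ρ))) := by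
        have h9 : Filter.Tendsto (fun m : ℕ => Bv * (a⁻¹) ^ m) Filter.atTop (nhds (Bv * 0)) :=
          (tendsto_pow_atTop_nhds_zero_of_lt_one
            (by positivity : (0:ℝ) ≤ a⁻¹) (inv_lt_one_of_one_lt₀ hμ)).const_mul Bv
        rw [mul_zero] at h9
        have h10 := h9.add (tendsto_const_nhds (x := C * ρ ^ n / (a - ρ)) (f := Filter.atTop))
        rw [zero_add] at h10
        exact h10
      have := ge_of_tendsto' htendsto (fun m => hbound m)
      calc Complex.abs (v n) ≤ C * ρ ^ n / (a - ρ) := this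
        _ = C / (a - ρ) * ρ ^ n := by ring
    exact ⟨fun _ => 0, v, ⟨0, ![], ![], by simp, by simp⟩,
      ⟨C / (a - ρ), ρ, hρ0, hρ1, hdecay⟩, fun t => by ring⟩


end FirstOrder

lemma step_lemma (μ : ℂ) (w : ℕ → ℂ) (B : ℝ) (hB : ∀ n, Complex.abs (w n) ≤ B)
    (h : Good (fun n => w (n + 1) - μ * w n)) : Good w := by
  classical
  obtain ⟨g, r, ⟨N, c, l, hl, hg⟩, hdec, hw'⟩ := h
  obtain ⟨C, ρ, hC, hρ0, hρ1, hr⟩ := decayic_nonneg_C hdec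
  set s : Finset (Fin N) := Finset.univ.filter (fun i => l i ≠ μ) with hs
  set P : ℕ → ℂ := fun n => ∑ i ∈ s, c i / (l i - μ) * l i ^ n with hP
  set cc : ℂ := ∑ i ∈ Finset.univ.filter (fun i => l i = μ), c i with hcc
  set v : ℕ → ℂ := fun n => w n - P n with hv
  have h2 : ∀ n, P (n + 1) - μ * P n = ∑ i ∈ s, c i * l i ^ n := by
    intro n
    rw [hP]
    simp only
    rw [Finset.mul_sum, ← Finset.sum_sub_distrib]
    refine Finset.sum_congr rfl fun i hi => ?_
    have hne : l i - μ ≠ 0 := by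
      rw [hs, Finset.mem_filter] at hi
      exact sub_ne_zero.mpr hi.2
    field_simp
    ring
  have h3 : ∀ n, g n = (∑ i ∈ s, c i * l i ^ n) + cc * μ ^ n := by
    intro n
    rw [hg n, hcc, Finset.sum_mul,
      ← Finset.sum_filter_add_sum_filter_not Finset.univ (fun i => l i ≠ μ)
        (fun i => c i * l i ^ n)]
    congr 1
    refine Finset.sum_congr (by simp [not_not]) (fun i hi => ?_)
    rw [Finset.mem_filter] at hi
    rw [hi.2]
  have hrecv : ∀ n, v (n + 1) = μ * v n + cc * μ ^ n + r n := by
    intro n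
    have h1 : w (n + 1) - μ * w n = g n + r n := hw' n
    have h2' := h2 n
    have h3' := h3 n
    rw [hv]
    simp only
    linear_combination h1 - h2' + h3'
  set D : ℝ := ∑ i ∈ s, Complex.abs (c i / (l i - μ)) with hD
  have hPb : ∀ n, Complex.abs (P n) ≤ D := by
    intro n
    refine le_trans (Complex.abs.sum_le _ _) (le_of_eq (Finset.sum_congr rfl fun i hi => ?_))
    rw [map_mul, map_pow, hl i, one_pow, mul_one]
  have hvB : ∀ n, Complex.abs (v n) ≤ B + D :=
    fun n => le_trans (Complex.abs.sub_le_add _ _) (add_le_add (hB n) (hPb n))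
  obtain ⟨g', r', htrig', hdec', hvg⟩ :=
    first_order μ cc v r C ρ (B + D) hC hρ0 hρ1 hr hvB hrecv
  refine ⟨fun n => g' n + P n, r',
    trig_add htrig' (trig_finsetSum s (fun i => c i / (l i - μ)) l (fun i _ => hl i)), hdec', ?_⟩
  intro n
  have := hvg n
  have hvn : v n = w n - P n := rfl
  rw [hvn] at this
  linear_combination this

open Polynomial in
noncomputable def shiftEnd : Module.End ℂ (ℕ → ℂ) where
  toFun w := fun n => w (n + 1)
  map_add' _ _ := rfl
  map_smul' _ _ := rfl

lemma shiftEnd_pow (k : ℕ) (w : ℕ → ℂ) (n : ℕ) : ((shiftEnd ^ k) w) n = w (n + k) := by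
  induction k generalizing w n with
  | zero => rfl
  | succ k ih =>
    rw [pow_succ]
    show ((shiftEnd ^ k) (shiftEnd w)) n = w (n + (k + 1))
    rw [ih]
    rfl

open Polynomial in
lemma aeval_X_sub_C_apply (μ : ℂ) (w : ℕ → ℂ) :
    (Polynomial.aeval shiftEnd (X - C μ)) w = fun n => w (n + 1) - μ * w n := by
  rw [map_sub, aeval_X, aeval_C]
  ext n
  show (shiftEnd w) n - ((algebraMap ℂ (Module.End ℂ (ℕ → ℂ)) μ) w) n = _
  rw [Module.algebraMap_end_apply]
  rfl

open Polynomial in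
lemma key_induction (L : List ℂ) (w : ℕ → ℂ) (B : ℝ) (hB : ∀ n, Complex.abs (w n) ≤ B)
    (h : (Polynomial.aeval shiftEnd (L.map fun ν => X - C ν).prod) w = 0) : Good w := by
  induction L generalizing w B with
  | nil =>
    simp only [List.map_nil, List.prod_nil, map_one] at h
    have hw0 : w = 0 := h
    exact ⟨fun _ => 0, fun _ => 0, trig_zero, ⟨0, 0, le_refl _, one_pos, by simp⟩,
      by simp [hw0]⟩
  | cons μ L ih =>
    have hfac : ((μ :: L).map fun ν => X - C ν).prod
        = ((L.map fun ν => X - C ν).prod) * (X - C μ) := by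
      rw [List.map_cons, List.prod_cons, mul_comm]
    rw [hfac, map_mul, Module.End.mul_apply, aeval_X_sub_C_apply] at h
    have hB0 : 0 ≤ B := le_trans (Complex.abs.nonneg _) (hB 0)
    have hb' : ∀ n, Complex.abs (w (n + 1) - μ * w n) ≤ B * (1 + Complex.abs μ) := by
      intro n
      refine le_trans (Complex.abs.sub_le_add _ _) ?_
      rw [map_mul]
      have := mul_le_mul_of_nonneg_left (hB n) (Complex.abs.nonneg μ)
      nlinarith [hB (n + 1)]
    exact step_lemma μ w B hB (ih _ _ hb' h)

open Polynomial

theorem AR_model_almost_periodic (d : ℕ) (hd : 1 ≤ d) (p : ℕ → ℝ)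
    (z : ℤ → ℝ)
    (hbdd : ∀ t : ℤ, -(d : ℤ) + 1 ≤ t → z t ∈ Set.Icc (-1 : ℝ) 1)
    (hrec : ∀ t : ℤ, 1 ≤ t → z t = ∑ ℓ ∈ Finset.Icc 1 d, p ℓ * z (t - ℓ)) :
    ∃ (n : ℕ) (c : Fin n → ℂ) (lam : Fin n → ℝ),
      Tendsto (fun t : ℕ =>
          (z t : ℂ) - ∑ i : Fin n, c i * Complex.exp (Complex.I * (lam i) * t))
        atTop (nhds 0) := by
  classical
  set z' : ℕ → ℂ := fun n => ((z n : ℝ) : ℂ) with hz'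
  have hzb : ∀ n : ℕ, Complex.abs (z' n) ≤ 1 := by
    intro n
    have h := hbdd n (by omega)
    rw [hz']
    simp only [Complex.abs_ofReal]
    rw [abs_le]
    exact ⟨h.1, h.2⟩
  set q : ℂ[X] := X ^ d - ∑ ℓ ∈ Finset.Icc 1 d, C ((p ℓ : ℂ)) * X ^ (d - ℓ) with hq
  have hmon : q.Monic := by
    refine monic_X_pow_sub (lt_of_le_of_lt (degree_sum_le _ _) ?_)
    rw [Finset.sup_lt_iff (by exact_mod_cast WithBot.bot_lt_coe d)]
    intro ℓ hℓ
    rw [Finset.mem_Icc] at hℓ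
    refine lt_of_le_of_lt (degree_C_mul_X_pow_le _ _) ?_
    exact_mod_cast Nat.sub_lt_of_pos_le hℓ.1 hℓ.2
  have haq : (Polynomial.aeval shiftEnd q) z' = 0 := by
    ext n
    rw [hq, map_sub, map_pow, aeval_X, map_sum]
    have hterm : ∀ ℓ, ((Polynomial.aeval shiftEnd) (C ((p ℓ : ℝ) : ℂ) * X ^ (d - ℓ))) z'
        = fun m => (p ℓ : ℂ) * z' (m + (d - ℓ)) := by
      intro ℓ
      rw [map_mul, aeval_C, map_pow, aeval_X]
      ext m
      rw [Module.End.mul_apply, Module.algebraMap_end_apply]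
      show (p ℓ : ℂ) * ((shiftEnd ^ (d - ℓ)) z') m = _
      rw [shiftEnd_pow]
    have hsub : ((shiftEnd ^ d) z' - ∑ ℓ ∈ Finset.Icc 1 d,
        ((Polynomial.aeval shiftEnd) (C ((p ℓ : ℝ) : ℂ) * X ^ (d - ℓ))) z') n
        = z' (n + d) - ∑ ℓ ∈ Finset.Icc 1 d, (p ℓ : ℂ) * z' (n + (d - ℓ)) := by
      rw [Pi.sub_apply, shiftEnd_pow, Finset.sum_apply]
      congr 1
      refine Finset.sum_congr rfl fun ℓ _ => ?_
      rw [hterm ℓ]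
    rw [LinearMap.sub_apply, LinearMap.sum_apply, hsub]
    -- now the real recurrence
    have hz : z ((n : ℤ) + d) = ∑ ℓ ∈ Finset.Icc 1 d, p ℓ * z ((n : ℤ) + d - ℓ) :=
      hrec _ (by omega)
    have hcast : ∀ ℓ ∈ Finset.Icc 1 d, ((n + (d - ℓ) : ℕ) : ℤ) = (n : ℤ) + d - ℓ := by
      intro ℓ hℓ
      rw [Finset.mem_Icc] at hℓ
      omega
    have hreal : z ((n + d : ℕ) : ℤ) = ∑ ℓ ∈ Finset.Icc 1 d, p ℓ * z ((n + (d - ℓ) : ℕ) : ℤ) := by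
      rw [show ((n + d : ℕ) : ℤ) = (n : ℤ) + d by push_cast; ring,
        Finset.sum_congr rfl (fun ℓ hℓ => by rw [hcast ℓ hℓ])]
      exact hz
    show ((z ((n + d : ℕ) : ℤ) : ℝ) : ℂ)
        - ∑ ℓ ∈ Finset.Icc 1 d, ((p ℓ : ℝ) : ℂ) * ((z ((n + (d - ℓ) : ℕ) : ℤ) : ℝ) : ℂ) = 0
    rw [sub_eq_zero]
    exact_mod_cast hreal
  have hsplit : q = (Multiset.map (fun a => X - C a) q.roots).prod :=
    (IsAlgClosed.splits q).eq_prod_roots_of_monic hmon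
  have hlist : q = ((q.roots.toList.map fun a => X - C a)).prod := by
    conv_lhs => rw [hsplit]
    conv_rhs => rw [← Multiset.prod_coe, ← Multiset.map_coe, Multiset.coe_toList]
  have hGood : Good z' := key_induction q.roots.toList z' 1 hzb (by rw [← hlist]; exact haq)
  obtain ⟨g, r, ⟨N, c, l, hl, hg⟩, ⟨C', ρ, hρ0, hρ1, hrr⟩, hzgr⟩ := hGood
  refine ⟨N, c, fun i => (l i).arg, ?_⟩
  have hdiff : ∀ t : ℕ, (z t : ℂ)
      - ∑ i : Fin N, c i * Complex.exp (Complex.I * ((l i).arg : ℂ) * t) = r t := by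
    intro t
    have hli : ∀ i : Fin N, Complex.exp (Complex.I * ((l i).arg : ℂ) * t) = l i ^ t := by
      intro i
      have h1 : ((Complex.abs (l i) : ℝ) : ℂ) * Complex.exp ((l i).arg * Complex.I) = l i :=
        Complex.abs_mul_exp_arg_mul_I (l i)
      rw [hl i, Complex.ofReal_one, one_mul] at h1
      calc Complex.exp (Complex.I * ((l i).arg : ℂ) * t)
          = Complex.exp (((l i).arg : ℂ) * Complex.I) ^ t := by
            rw [← Complex.exp_nat_mul]; congr 1; ring
        _ = l i ^ t := by rw [h1]
    have h2 : (z t : ℂ) = g t + r t := hzgr t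
    rw [Finset.sum_congr rfl (fun i _ => by rw [hli i]), h2, hg t]
    ring
  have hrt : Tendsto r atTop (nhds 0) := by
    rw [tendsto_zero_iff_norm_tendsto_zero]
    refine squeeze_zero (fun t => norm_nonneg _) (fun t => hrr t) ?_
    have h3 := (tendsto_pow_atTop_nhds_zero_of_lt_one hρ0 hρ1).const_mul C'
    rw [mul_zero] at h3
    exact h3
  exact Tendsto.congr (fun t => (hdiff t).symm) hrt
end
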